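/- Let π0, π1 : [0,1] → [0,1] be a proper binarized scoring rule, let the agent have actual belief μ ∈ (0,1) and state-dependent utilities with Δu0 > 0 and Δu1 > 0, and suppose the report p ∈ (0,1) is optimal for her. Then the agent over-reports if and only if her utility is supermodular and under-reports if and only if it is submodular: p > μ ⟺ Δu1 > Δu0, p < μ ⟺ Δu1 < Δu0, and p = μ ⟺ Δu1 = Δu0. -/

import Mathlib

open Filter Topology

theorem misreport_iff_supermodular
    (pi0 pi1 : ℝ → ℝ)
    (hpi0 : ∀ r ∈ Set.Icc (0:ℝ) 1, pi0 r ∈ Set.Icc (0:ℝ) 1)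
    (hpi1 : ∀ r ∈ Set.Icc (0:ℝ) 1, pi1 r ∈ Set.Icc (0:ℝ) 1)
    (hproper : ∀ q ∈ Set.Icc (0:ℝ) 1, ∀ r ∈ Set.Icc (0:ℝ) 1, r ≠ q →
      (1 - q) * pi0 r + q * pi1 r < (1 - q) * pi0 q + q * pi1 q)
    (μ : ℝ) (hμ : μ ∈ Set.Ioo (0:ℝ) 1)
    (u0l u0h u1l u1h : ℝ) (hu0 : u0l < u0h) (hu1 : u1l < u1h)
    (p : ℝ) (hp : p ∈ Set.Ioo (0:ℝ) 1)
    (hopt : ∀ r ∈ Set.Icc (0:ℝ) 1,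
      (1 - μ) * (pi0 r * u0h + (1 - pi0 r) * u0l) + μ * (pi1 r * u1h + (1 - pi1 r) * u1l) ≤
      (1 - μ) * (pi0 p * u0h + (1 - pi0 p) * u0l) + μ * (pi1 p * u1h + (1 - pi1 p) * u1l))
    : (p > μ ↔ u1h - u1l > u0h - u0l) ∧
      (p < μ ↔ u1h - u1l < u0h - u0l) ∧
      (p = μ ↔ u1h - u1l = u0h - u0l) := by
  obtain ⟨hμ0, hμ1⟩ := hμ
  obtain ⟨hp0, hp1⟩ := hp
  set a : ℝ := (1 - μ) * (u0h - u0l) with ha_def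
  set b : ℝ := μ * (u1h - u1l) with hb_def
  have ha : 0 < a := mul_pos (by linarith) (by linarith)
  have hb : 0 < b := mul_pos hμ0 (by linarith)
  have hs : 0 < a + b := by linarith
  set q : ℝ := b / (a + b) with hq_def
  have hq0 : 0 < q := div_pos hb hs
  have hq1 : q < 1 := (div_lt_one hs).2 (by linarith)
  have hqmem : q ∈ Set.Icc (0:ℝ) 1 := ⟨le_of_lt hq0, le_of_lt hq1⟩
  have hpmem : p ∈ Set.Icc (0:ℝ) 1 := ⟨le_of_lt hp0, le_of_lt hp1⟩
  have hsq : (a + b) * q = b := by rw [hq_def]; field_simp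
  have hsq' : (a + b) * (1 - q) = a := by
    have : (a + b) * (1 - q) = (a + b) - (a + b) * q := by ring
    rw [this, hsq]; ring
  -- optimality in terms of a, b
  have expand : ∀ r : ℝ, (1 - μ) * (pi0 r * u0h + (1 - pi0 r) * u0l) + μ * (pi1 r * u1h + (1 - pi1 r) * u1l) = a * pi0 r + b * pi1 r + ((1 - μ) * u0l + μ * u1l) := by
    intro r; rw [ha_def, hb_def]; ring
  have hopt' : ∀ r ∈ Set.Icc (0:ℝ) 1, a * pi0 r + b * pi1 r ≤ a * pi0 p + b * pi1 p := by
    intro r hr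
    have h := hopt r hr
    rw [expand r, expand p] at h
    linarith
  -- p = q
  have hpq : p = q := by
    by_contra hne
    have h1 := hproper q hqmem p hpmem hne
    have h2 : (a + b) * ((1 - q) * pi0 p + q * pi1 p) <
        (a + b) * ((1 - q) * pi0 q + q * pi1 q) := by
      exact (mul_lt_mul_iff_right₀ hs).2 h1
    have e1 : ∀ x y : ℝ, (a + b) * ((1 - q) * x + q * y) = a * x + b * y := by
      intro x y
      have : (a + b) * ((1 - q) * x + q * y) = ((a + b) * (1 - q)) * x + ((a + b) * q) * y := by ring
      rw [this, hsq, hsq']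
    have h3 : a * pi0 p + b * pi1 p < a * pi0 q + b * pi1 q := by
      rw [e1, e1] at h2; exact h2
    exact absurd (hopt' q hqmem) (not_le.2 h3)
  -- key identity: (p - μ) * (a + b) = μ * (1 - μ) * ((u1h - u1l) - (u0h - u0l))
  have hkey : (p - μ) * (a + b) = μ * (1 - μ) * ((u1h - u1l) - (u0h - u0l)) := by
    rw [hpq]
    have : (q - μ) * (a + b) = b - μ * (a + b) := by
      have := hsq; nlinarith [hsq]
    rw [this, ha_def, hb_def]; ring
  have hμμ : 0 < μ * (1 - μ) := mul_pos hμ0 (by linarith)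
  refine ⟨⟨fun h => ?_, fun h => ?_⟩, ⟨fun h => ?_, fun h => ?_⟩, ⟨fun h => ?_, fun h => ?_⟩⟩
  · nlinarith
  · nlinarith
  · nlinarith
  · nlinarith
  · nlinarith
  · nlinarith
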